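/- Let (Z_k)_{k≥1} be i.i.d. random variables taking values in [m] with P(Z_1 = i) = x(i) where x(i) > 0 and ∑ x(i) = 1 (m = d+1). Fix distinct i_1, ..., i_m ∈ [m] and let m_j = min{k : Z_k = i_j}. Then P(m_1 < m_2 < ... < m_m) = ∑_{n_2,...,n_m ≥ 0} x(i_1) ∏_{k=2}^m ( (∑_{l=1}^{k-1} x(i_l))^{n_k} x(i_k) ) = x(i_1) ∏_{k=2}^m x(i_k) / (1 − ∑_{l=1}^{k-1} x(i_l)). -/

import Mathlib

open MeasureTheory ProbabilityTheory

/-- Positions of the first occurrences given gap sizes. -/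
def posFn (nn : ℕ → ℕ) : ℕ → ℕ
  | 0 => 0
  | j + 1 => posFn nn j + nn j + 1

lemma posFn_strictMono (nn : ℕ → ℕ) : StrictMono (posFn nn) :=
  strictMono_nat_of_lt_succ fun j => by simp [posFn]

/-- The allowed symbols at time `t`. -/
noncomputable def blockSet (d : ℕ) (σ : Equiv.Perm (Fin (d + 1))) (q : ℕ → ℕ) (t : ℕ) :
    Set (Fin (d + 1)) :=
  if h : ∃ j : Fin (d + 1), q j = t then {σ h.choose} else σ '' {j | q (j : ℕ) ≤ t}

lemma blockSet_pos (d : ℕ) (σ : Equiv.Perm (Fin (d + 1))) {q : ℕ → ℕ} (hq : StrictMono q)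
    (j : Fin (d + 1)) : blockSet d σ q (q (j : ℕ)) = {σ j} := by
  have h : ∃ j' : Fin (d + 1), q (j' : ℕ) = q (j : ℕ) := ⟨j, rfl⟩
  rw [blockSet, dif_pos h]
  have := h.choose_spec
  have : h.choose = j := Fin.ext (hq.injective this)
  rw [this]

lemma blockSet_mid (d : ℕ) (σ : Equiv.Perm (Fin (d + 1))) {q : ℕ → ℕ} (hq : StrictMono q)
    {k t : ℕ} (hk : k < d) (h1 : q k < t) (h2 : t < q (k + 1)) :
    blockSet d σ q t = σ '' {j : Fin (d + 1) | (j : ℕ) ≤ k} := by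
  have hno : ¬∃ j : Fin (d + 1), q (j : ℕ) = t := by
    rintro ⟨j, hj⟩
    rcases le_or_gt (j : ℕ) k with h | h
    · exact absurd hj (by have := hq.monotone h; omega)
    · have := hq.monotone (show k + 1 ≤ (j:ℕ) by omega)
      omega
  rw [blockSet, dif_neg hno]
  have hset : {j : Fin (d + 1) | q (j : ℕ) ≤ t} = {j : Fin (d + 1) | (j : ℕ) ≤ k} := by
    ext j
    show q (j : ℕ) ≤ t ↔ (j : ℕ) ≤ k
    constructor
    · intro hj
      by_contra hc
      have := hq.monotone (show k + 1 ≤ (j:ℕ) by omega)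
      omega
    · intro hj
      have := hq.monotone hj
      omega
  rw [hset]

/-- Each time `≤ q d` is either a first-occurrence time or strictly inside a block. -/
lemma time_classify {q : ℕ → ℕ} (hq0 : q 0 = 0) (hq : StrictMono q) {d t : ℕ} (ht : t ≤ q d)
    (hne : ∀ j ≤ d, q j ≠ t) : ∃ k < d, q k < t ∧ t < q (k + 1) := by
  have htd : t < q d := lt_of_le_of_ne ht fun h => hne d le_rfl h.symm
  have h0 : 0 < d := by
    by_contra h
    push_neg at h
    interval_cases d
    · omega
  have hq0t : q 0 ≤ t := by omega
  have hspec : q (Nat.findGreatest (fun k => q k ≤ t) d) ≤ t :=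
    Nat.findGreatest_spec (P := fun k => q k ≤ t) (Nat.zero_le d) hq0t
  set k := Nat.findGreatest (fun k => q k ≤ t) d with hk
  have hkd : k < d := by
    rcases lt_or_eq_of_le (Nat.findGreatest_le (P := fun k => q k ≤ t) d) with h | h
    · exact h
    · exfalso; rw [← hk] at h; rw [h] at hspec; omega
  refine ⟨k, hkd, lt_of_le_of_ne hspec (hne k hkd.le), ?_⟩
  by_contra hc
  push_neg at hc
  exact Nat.findGreatest_is_greatest (P := fun k => q k ≤ t)
    (Nat.lt_succ_self k) (by omega) hc

/-- tsum over a finite product of ℕ factorizes. -/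
lemma tsum_pi_fin : ∀ {d : ℕ} (g : Fin d → ℕ → ENNReal),
    ∑' n : Fin d → ℕ, ∏ k, g k (n k) = ∏ k, ∑' j, g k j := by
  intro d
  induction d with
  | zero =>
    intro g
    simp only [Finset.univ_eq_empty, Finset.prod_empty]
    exact tsum_eq_single default fun b hb => absurd (Subsingleton.elim b default) hb
  | succ d ih =>
    intro g
    rw [← (Fin.consEquiv (fun _ => ℕ)).tsum_eq]
    have : ∀ p : ℕ × (Fin d → ℕ),
        (∏ k, g k ((Fin.consEquiv (fun _ => ℕ)) p k))
          = g 0 p.1 * ∏ k : Fin d, g k.succ (p.2 k) := by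
      intro p
      rw [Fin.prod_univ_succ]
      simp [Fin.consEquiv]
    simp only [this]
    rw [ENNReal.tsum_prod']
    simp only [ENNReal.tsum_mul_left]
    rw [ENNReal.tsum_mul_right, ih, Fin.prod_univ_succ]

theorem first_occurrence_order_prob
    {Ω : Type*} [MeasurableSpace Ω] (P : Measure Ω) [IsProbabilityMeasure P]
    (d : ℕ) (hd : 1 ≤ d)
    (x : Fin (d + 1) → ℝ) (hx : ∀ i, 0 < x i) (hsum : ∑ i, x i = 1)
    (Z : ℕ → Ω → Fin (d + 1)) (hmeas : ∀ k, Measurable (Z k))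
    (hindep : iIndepFun Z P)
    (hdist : ∀ k i, P {ω | Z k ω = i} = ENNReal.ofReal (x i))
    (σ : Equiv.Perm (Fin (d + 1))) :
    P {ω | StrictMono fun j : Fin (d + 1) => sInf {k : ℕ | Z k ω = σ j}}
        = ENNReal.ofReal (∑' n : Fin d → ℕ,
            x (σ 0) * ∏ k : Fin d,
              ((∑ l ∈ Finset.univ.filter (fun l : Fin (d + 1) => (l : ℕ) ≤ (k : ℕ)),
                  x (σ l)) ^ (n k) * x (σ k.succ))) ∧
    (∑' n : Fin d → ℕ,
        x (σ 0) * ∏ k : Fin d,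
          ((∑ l ∈ Finset.univ.filter (fun l : Fin (d + 1) => (l : ℕ) ≤ (k : ℕ)),
              x (σ l)) ^ (n k) * x (σ k.succ)))
      = x (σ 0) * ∏ k : Fin d,
          x (σ k.succ)
            / (1 - ∑ l ∈ Finset.univ.filter (fun l : Fin (d + 1) => (l : ℕ) ≤ (k : ℕ)),
                x (σ l)) := by
  classical
  -- notation
  set A : Fin d → ℝ := fun k =>
    ∑ l ∈ Finset.univ.filter (fun l : Fin (d + 1) => (l : ℕ) ≤ (k : ℕ)), x (σ l) with hA_def
  set τ : Ω → Fin (d + 1) → ℕ := fun ω j => sInf {k : ℕ | Z k ω = σ j} with hτ_def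
  set nn : (Fin d → ℕ) → ℕ → ℕ := fun n k => if h : k < d then n ⟨k, h⟩ else 0 with hnn_def
  set q : (Fin d → ℕ) → ℕ → ℕ := fun n => posFn (nn n) with hq_def
  set Ev : (Fin d → ℕ) → Set Ω := fun n =>
    ⋂ t ∈ Finset.range (q n d + 1), Z t ⁻¹' blockSet d σ (q n) t with hEv_def
  have hqmono : ∀ n, StrictMono (q n) := fun n => posFn_strictMono _
  have hq0 : ∀ n, q n 0 = 0 := fun n => rfl
  have hqsucc : ∀ n (k : ℕ) (hk : k < d), q n (k + 1) = q n k + n ⟨k, hk⟩ + 1 := by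
    intro n k hk
    show posFn (nn n) (k + 1) = _
    rw [posFn]
    simp only [hnn_def, dif_pos hk]
    rfl
  have hEvmem : ∀ n ω, ω ∈ Ev n ↔ ∀ t ≤ q n d, Z t ω ∈ blockSet d σ (q n) t := by
    intro n ω
    simp [hEv_def, Nat.lt_succ_iff]
  -- first occurrence times on Ev n are exactly q n
  have hfirst : ∀ n ω, ω ∈ Ev n → ∀ j : Fin (d + 1), τ ω j = q n (j : ℕ) := by
    intro n ω hω j
    rw [hEvmem] at hω
    have hb : ∀ t ≤ q n d, ∃ l : Fin (d + 1), q n (l : ℕ) ≤ t ∧ Z t ω = σ l := by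
      intro t ht
      have h := hω t ht
      rw [blockSet] at h
      split_ifs at h with hc
      · exact ⟨hc.choose, le_of_eq hc.choose_spec, h⟩
      · obtain ⟨l, hl, hl2⟩ := h
        exact ⟨l, hl, hl2.symm⟩
    have hjd : (j : ℕ) ≤ d := by omega
    have hqjd : q n (j : ℕ) ≤ q n d := (hqmono n).monotone hjd
    have hZ : Z (q n (j : ℕ)) ω = σ j := by
      have := hω (q n (j : ℕ)) hqjd
      rw [blockSet_pos d σ (hqmono n) j] at this
      exact this
    have hnonempty : (q n (j : ℕ)) ∈ {k : ℕ | Z k ω = σ j} := hZ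
    refine le_antisymm (Nat.sInf_le hnonempty) ?_
    by_contra hc
    push_neg at hc
    have hmem : τ ω j ∈ {k : ℕ | Z k ω = σ j} := Nat.sInf_mem ⟨_, hnonempty⟩
    obtain ⟨l, hl, hl2⟩ := hb (τ ω j) (le_trans hc.le hqjd)
    have : l = j := σ.injective (hl2.symm.trans hmem)
    rw [this] at hl
    omega
  -- the union of the events is the target event
  have hcover : {ω | StrictMono fun j : Fin (d + 1) => sInf {k : ℕ | Z k ω = σ j}}
      = ⋃ n : Fin d → ℕ, Ev n := by
    ext ω
    simp only [Set.mem_setOf_eq, Set.mem_iUnion]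
    constructor
    · intro hmono
      have hτmono : StrictMono (τ ω) := hmono
      have hj₀ : τ ω (σ.symm (Z 0 ω)) = 0 := by
        have h0 : 0 ∈ {k : ℕ | Z k ω = σ (σ.symm (Z 0 ω))} := by
          simp [Set.mem_setOf_eq]
        exact Nat.le_zero.mp (Nat.sInf_le h0)
      have hne : ∀ j : Fin (d + 1), {k : ℕ | Z k ω = σ j}.Nonempty := by
        intro j
        by_contra h
        rw [Set.not_nonempty_iff_eq_empty] at h
        have hj0 : τ ω j = 0 := by rw [hτ_def]; simp only []; rw [h, Nat.sInf_empty]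
        have : j = σ.symm (Z 0 ω) := hτmono.injective (hj0.trans hj₀.symm)
        rw [this] at h
        have : (0 : ℕ) ∈ {k : ℕ | Z k ω = σ (σ.symm (Z 0 ω))} := by simp
        rw [h] at this
        exact this
      have hZτ : ∀ j : Fin (d + 1), Z (τ ω j) ω = σ j := fun j => Nat.sInf_mem (hne j)
      have hτ0 : τ ω 0 = 0 := by
        have := hτmono.monotone (Fin.zero_le (σ.symm (Z 0 ω)))
        omega
      have hlt : ∀ k : Fin d, τ ω k.castSucc < τ ω k.succ :=
        fun k => hτmono (Fin.castSucc_lt_succ : k.castSucc < k.succ)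
      refine ⟨fun k => τ ω k.succ - τ ω k.castSucc - 1, ?_⟩
      set n : Fin d → ℕ := fun k => τ ω k.succ - τ ω k.castSucc - 1 with hn_def
      have hqτ : ∀ m : ℕ, ∀ hm : m ≤ d, q n m = τ ω ⟨m, by omega⟩ := by
        intro m
        induction m with
        | zero => intro hm; rw [hq0]; rw [show (⟨0, by omega⟩ : Fin (d+1)) = 0 from rfl]; omega
        | succ m ihm =>
          intro hm
          have hmd : m < d := by omega
          have hk := hlt ⟨m, hmd⟩
          have hcs : (⟨m, hmd⟩ : Fin d).castSucc = ⟨m, by omega⟩ := rfl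
          have hsc : (⟨m, hmd⟩ : Fin d).succ = ⟨m + 1, by omega⟩ := rfl
          rw [hqsucc n m hmd, ihm (by omega)]
          rw [hn_def]
          simp only [hcs, hsc] at hk ⊢
          omega
      rw [hEvmem]
      intro t ht
      by_cases hcase : ∃ j : Fin (d + 1), q n (j : ℕ) = t
      · obtain ⟨j, hj⟩ := hcase
        rw [← hj, blockSet_pos d σ (hqmono n) j]
        have : q n (j : ℕ) = τ ω j := by
          rw [hqτ (j : ℕ) (by omega)]
        rw [this]
        exact hZτ j
      · push_neg at hcase
        have hne' : ∀ j ≤ d, q n j ≠ t := by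
          intro j hj
          exact hcase ⟨j, by omega⟩
        obtain ⟨k, hkd, hk1, hk2⟩ := time_classify (hq0 n) (hqmono n) ht hne'
        rw [blockSet_mid d σ (hqmono n) hkd hk1 hk2]
        refine ⟨σ.symm (Z t ω), ?_, by simp⟩
        set l := σ.symm (Z t ω) with hl_def
        have hlt' : τ ω l ≤ t := Nat.sInf_le (by simp [hτ_def, hl_def])
        have hql : q n (l : ℕ) = τ ω l := by
          rw [hqτ (l : ℕ) (by omega)]
        show (l : ℕ) ≤ k
        by_contra hc
        push_neg at hc
        have := (hqmono n).monotone (show k + 1 ≤ (l : ℕ) by omega)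
        omega
    · rintro ⟨n, hω⟩
      intro j j' hjj'
      have h1 := hfirst n ω hω j
      have h2 := hfirst n ω hω j'
      show τ ω j < τ ω j'
      rw [h1, h2]
      exact hqmono n (show (j : ℕ) < (j' : ℕ) from hjj')
  -- disjointness
  have hdisj : Pairwise (Function.onFun Disjoint Ev) := by
    intro n n' hnn'
    rw [Function.onFun, Set.disjoint_left]
    intro ω hω hω'
    apply hnn'
    funext k
    have h1 := hfirst n ω hω
    have h2 := hfirst n' ω hω'
    have hq_eq : ∀ j : Fin (d + 1), q n (j : ℕ) = q n' (j : ℕ) := fun j =>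
      (h1 j).symm.trans (h2 j)
    have e1 := hqsucc n (k : ℕ) k.isLt
    have e2 := hqsucc n' (k : ℕ) k.isLt
    have hk1 : (⟨(k : ℕ), k.isLt⟩ : Fin d) = k := rfl
    rw [hk1] at e1 e2
    have ha := hq_eq ⟨(k : ℕ), by omega⟩
    have hb := hq_eq ⟨(k : ℕ) + 1, by omega⟩
    simp only [] at ha hb
    omega
  -- measurability
  have hEvmeas : ∀ n, MeasurableSet (Ev n) := by
    intro n
    apply Finset.measurableSet_biInter
    intro t ht
    exact (hmeas t) MeasurableSet.of_discrete
  -- single-symbol probabilities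
  have hsingle : ∀ (t : ℕ) (i : Fin (d + 1)),
      P (Z t ⁻¹' {i}) = ENNReal.ofReal (x i) := by
    intro t i
    rw [show Z t ⁻¹' {i} = {ω | Z t ω = i} from rfl]
    exact hdist t i
  -- block probabilities
  have hblockP : ∀ (t : ℕ) (k : ℕ) (hk : k < d),
      P (Z t ⁻¹' (σ '' {j : Fin (d + 1) | (j : ℕ) ≤ k})) = ENNReal.ofReal (A ⟨k, hk⟩) := by
    intro t k hk
    have himg : Z t ⁻¹' (σ '' {j : Fin (d + 1) | (j : ℕ) ≤ k})
        = ⋃ l ∈ Finset.univ.filter (fun l : Fin (d + 1) => (l : ℕ) ≤ k), Z t ⁻¹' {σ l} := by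
      ext ω
      simp only [Set.mem_preimage, Set.mem_iUnion, Finset.mem_filter, Finset.mem_univ, true_and,
        Set.mem_singleton_iff]
      constructor
      · rintro ⟨l, hl, hl2⟩
        exact ⟨l, hl, hl2.symm⟩
      · rintro ⟨l, hl, hl2⟩
        exact ⟨l, hl, hl2.symm⟩
    rw [himg, measure_biUnion_finset ?hd ?hm]
    case hd =>
      intro a ha b hb hab
      apply Set.disjoint_left.mpr
      intro ω h1 h2
      simp only [Set.mem_preimage, Set.mem_singleton_iff] at h1 h2
      exact hab (σ.injective (h1.symm.trans h2))
    case hm =>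
      intro l hl
      exact (hmeas t) MeasurableSet.of_discrete
    rw [hA_def]
    rw [ENNReal.ofReal_sum_of_nonneg (fun l hl => (hx (σ l)).le)]
    exact Finset.sum_congr rfl fun l hl => hsingle t (σ l)
  -- probability of each elementary event
  have hPEv : ∀ n : Fin d → ℕ,
      P (Ev n) = ENNReal.ofReal (x (σ 0)) * ∏ k : Fin d,
        (ENNReal.ofReal (A k)) ^ (n k) * ENNReal.ofReal (x (σ k.succ)) := by
    intro n
    have hindep' : P (Ev n) = ∏ t ∈ Finset.range (q n d + 1),
        P (Z t ⁻¹' blockSet d σ (q n) t) := by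
      rw [hEv_def]
      exact hindep.meas_biInter fun t ht =>
        ⟨blockSet d σ (q n) t, MeasurableSet.of_discrete, rfl⟩
    rw [hindep']
    have key : ∀ j : ℕ, j ≤ d → ∏ t ∈ Finset.range (q n j + 1),
        P (Z t ⁻¹' blockSet d σ (q n) t)
        = ENNReal.ofReal (x (σ 0)) * ∏ k ∈ Finset.univ.filter (fun k : Fin d => (k : ℕ) < j),
            (ENNReal.ofReal (A k)) ^ (n k) * ENNReal.ofReal (x (σ k.succ)) := by
      intro j
      induction j with
      | zero =>
        intro _
        have hb0 : blockSet d σ (q n) 0 = {σ 0} := blockSet_pos d σ (hqmono n) 0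
        have hr : Finset.range (q n 0 + 1) = {0} := by rw [hq0]; rfl
        rw [hr, Finset.prod_singleton, hb0, hsingle]
        have : Finset.univ.filter (fun k : Fin d => (k : ℕ) < 0) = ∅ := by
          ext k; simp
        rw [this, Finset.prod_empty, mul_one]
      | succ j ih =>
        intro hj
        have hjd : j < d := by omega
        have h1 : q n j + 1 ≤ q n (j + 1) := (hqmono n) (Nat.lt_succ_self j)
        have hsplit : ∏ t ∈ Finset.range (q n (j + 1) + 1),
            P (Z t ⁻¹' blockSet d σ (q n) t)
            = (∏ t ∈ Finset.range (q n j + 1), P (Z t ⁻¹' blockSet d σ (q n) t))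
              * (∏ t ∈ Finset.Ico (q n j + 1) (q n (j + 1)),
                  P (Z t ⁻¹' blockSet d σ (q n) t))
              * P (Z (q n (j + 1)) ⁻¹' blockSet d σ (q n) (q n (j + 1))) := by
          rw [Finset.range_eq_Ico]
          rw [← Finset.prod_Ico_consecutive _ (by omega : 0 ≤ q n j + 1)
            (by omega : q n j + 1 ≤ q n (j + 1) + 1)]
          rw [← Finset.prod_Ico_consecutive _ (by omega : q n j + 1 ≤ q n (j + 1))
            (by omega : q n (j + 1) ≤ q n (j + 1) + 1)]
          rw [Nat.Ico_succ_singleton, Finset.prod_singleton, mul_assoc]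
          rw [Finset.range_eq_Ico]
        rw [hsplit]
        -- middle block
        have hmid : ∏ t ∈ Finset.Ico (q n j + 1) (q n (j + 1)),
            P (Z t ⁻¹' blockSet d σ (q n) t)
            = (ENNReal.ofReal (A ⟨j, hjd⟩)) ^ (n ⟨j, hjd⟩) := by
          have hconst : ∀ t ∈ Finset.Ico (q n j + 1) (q n (j + 1)),
              P (Z t ⁻¹' blockSet d σ (q n) t) = ENNReal.ofReal (A ⟨j, hjd⟩) := by
            intro t ht
            rw [Finset.mem_Ico] at ht
            rw [blockSet_mid d σ (hqmono n) hjd (by omega) (by omega)]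
            exact hblockP t j hjd
          rw [Finset.prod_congr rfl hconst, Finset.prod_const, Nat.card_Ico]
          congr 1
          rw [hqsucc n j hjd]
          omega
        -- endpoint
        have hend : P (Z (q n (j + 1)) ⁻¹' blockSet d σ (q n) (q n (j + 1)))
            = ENNReal.ofReal (x (σ (⟨j, hjd⟩ : Fin d).succ)) := by
          have hcoe : (q n (j + 1)) = q n (((⟨j, hjd⟩ : Fin d).succ : Fin (d + 1)) : ℕ) := rfl
          rw [hcoe, blockSet_pos d σ (hqmono n) _, hsingle]
        rw [ih (by omega), hmid, hend]
        have hfilter : Finset.univ.filter (fun k : Fin d => (k : ℕ) < j + 1)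
            = insert (⟨j, hjd⟩ : Fin d)
                (Finset.univ.filter (fun k : Fin d => (k : ℕ) < j)) := by
          ext k
          simp only [Finset.mem_filter, Finset.mem_univ, true_and, Finset.mem_insert,
            Fin.ext_iff]
          omega
        rw [hfilter, Finset.prod_insert (by simp)]
        ring
    have hfinal := key d le_rfl
    have huniv : Finset.univ.filter (fun k : Fin d => (k : ℕ) < d) = Finset.univ := by
      ext k; simp [k.isLt]
    rw [huniv] at hfinal
    exact hfinal
  -- facts about A
  have hA0 : ∀ k : Fin d, 0 ≤ A k := by
    intro k
    exact Finset.sum_nonneg fun l _ => (hx (σ l)).le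
  have hAtot : ∑ l : Fin (d + 1), x (σ l) = 1 := by
    rw [Equiv.sum_comp σ x]; exact hsum
  have hA1 : ∀ k : Fin d, A k < 1 := by
    intro k
    rw [hA_def, ← hAtot]
    apply Finset.sum_lt_sum_of_subset (Finset.filter_subset _ _) (Finset.mem_univ k.succ)
    · simp only [Finset.mem_filter, Finset.mem_univ, true_and, not_le, Fin.val_succ]
      omega
    · exact hx (σ k.succ)
    · intro l _ _
      exact (hx (σ l)).le
  have hterm_nonneg : ∀ n : Fin d → ℕ,
      0 ≤ x (σ 0) * ∏ k : Fin d, (A k ^ (n k) * x (σ k.succ)) := by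
    intro n
    apply mul_nonneg (hx _).le
    exact Finset.prod_nonneg fun k _ =>
      mul_nonneg (pow_nonneg (hA0 k) _) (hx _).le
  have hterm_eq : ∀ n : Fin d → ℕ,
      ENNReal.ofReal (x (σ 0) * ∏ k : Fin d, (A k ^ (n k) * x (σ k.succ)))
        = ENNReal.ofReal (x (σ 0)) * ∏ k : Fin d,
            (ENNReal.ofReal (A k)) ^ (n k) * ENNReal.ofReal (x (σ k.succ)) := by
    intro n
    rw [ENNReal.ofReal_mul (hx _).le,
      ENNReal.ofReal_prod_of_nonneg fun k _ => mul_nonneg (pow_nonneg (hA0 k) _) (hx _).le]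
    congr 1
    refine Finset.prod_congr rfl fun k _ => ?_
    rw [ENNReal.ofReal_mul (pow_nonneg (hA0 k) _), ENNReal.ofReal_pow (hA0 k)]
  have hPsum : P {ω | StrictMono fun j : Fin (d + 1) => sInf {k : ℕ | Z k ω = σ j}}
      = ∑' n : Fin d → ℕ, P (Ev n) := by
    rw [hcover]
    exact measure_iUnion hdisj hEvmeas
  have hgeom : ∀ k : Fin d,
      ∑' m : ℕ, (ENNReal.ofReal (A k)) ^ m * ENNReal.ofReal (x (σ k.succ))
        = ENNReal.ofReal (x (σ k.succ) / (1 - A k)) := by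
    intro k
    rw [ENNReal.tsum_mul_right, ENNReal.tsum_geometric]
    have h1 : (1 : ENNReal) - ENNReal.ofReal (A k) = ENNReal.ofReal (1 - A k) := by
      rw [ENNReal.ofReal_sub 1 (hA0 k), ENNReal.ofReal_one]
    rw [h1, ← ENNReal.ofReal_inv_of_pos (by linarith [hA1 k])]
    rw [← ENNReal.ofReal_mul (inv_nonneg.mpr (by linarith [hA1 k]))]
    rw [div_eq_inv_mul]
  have hRnonneg : 0 ≤ x (σ 0) * ∏ k : Fin d, x (σ k.succ) / (1 - A k) := by
    apply mul_nonneg (hx _).le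
    exact Finset.prod_nonneg fun k _ => div_nonneg (hx _).le (by linarith [hA1 k])
  have htsumE : ∑' n : Fin d → ℕ, P (Ev n)
      = ENNReal.ofReal (x (σ 0) * ∏ k : Fin d, x (σ k.succ) / (1 - A k)) := by
    calc ∑' n : Fin d → ℕ, P (Ev n)
        = ∑' n : Fin d → ℕ, ENNReal.ofReal (x (σ 0)) * ∏ k : Fin d,
            (ENNReal.ofReal (A k)) ^ (n k) * ENNReal.ofReal (x (σ k.succ)) := by
          exact tsum_congr fun n => hPEv n
      _ = ENNReal.ofReal (x (σ 0)) * ∑' n : Fin d → ℕ, ∏ k : Fin d,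
            (ENNReal.ofReal (A k)) ^ (n k) * ENNReal.ofReal (x (σ k.succ)) :=
          ENNReal.tsum_mul_left
      _ = ENNReal.ofReal (x (σ 0)) * ∏ k : Fin d,
            ∑' m : ℕ, (ENNReal.ofReal (A k)) ^ m * ENNReal.ofReal (x (σ k.succ)) := by
          rw [tsum_pi_fin (fun k m => (ENNReal.ofReal (A k)) ^ m * ENNReal.ofReal (x (σ k.succ)))]
      _ = ENNReal.ofReal (x (σ 0)) * ∏ k : Fin d,
            ENNReal.ofReal (x (σ k.succ) / (1 - A k)) := by
          rw [Finset.prod_congr rfl fun k _ => hgeom k]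
      _ = ENNReal.ofReal (x (σ 0) * ∏ k : Fin d, x (σ k.succ) / (1 - A k)) := by
          rw [ENNReal.ofReal_mul (hx _).le,
            ENNReal.ofReal_prod_of_nonneg fun k _ =>
              div_nonneg (hx _).le (by linarith [hA1 k])]
  have hofsum : ∑' n : Fin d → ℕ,
      ENNReal.ofReal (x (σ 0) * ∏ k : Fin d, (A k ^ (n k) * x (σ k.succ)))
        = ENNReal.ofReal (x (σ 0) * ∏ k : Fin d, x (σ k.succ) / (1 - A k)) := by
    rw [tsum_congr fun n => (hterm_eq n).trans (hPEv n).symm, htsumE]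
  have htsum_term : (∑' n : Fin d → ℕ, x (σ 0) * ∏ k : Fin d, (A k ^ (n k) * x (σ k.succ)))
      = x (σ 0) * ∏ k : Fin d, x (σ k.succ) / (1 - A k) := by
    have hne : ∀ n : Fin d → ℕ,
        ENNReal.ofReal (x (σ 0) * ∏ k : Fin d, (A k ^ (n k) * x (σ k.succ))) ≠ ⊤ :=
      fun n => ENNReal.ofReal_ne_top
    have h2 := ENNReal.tsum_toReal_eq hne
    rw [hofsum] at h2
    rw [ENNReal.toReal_ofReal hRnonneg] at h2
    have h3 : ∀ n : Fin d → ℕ,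
        (ENNReal.ofReal (x (σ 0) * ∏ k : Fin d, (A k ^ (n k) * x (σ k.succ)))).toReal
          = x (σ 0) * ∏ k : Fin d, (A k ^ (n k) * x (σ k.succ)) :=
      fun n => ENNReal.toReal_ofReal (hterm_nonneg n)
    rw [tsum_congr h3] at h2
    exact h2.symm
  constructor
  · rw [hPsum, htsumE, htsum_term]
  · exact htsum_term
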